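/- Let k : ℝ² → ℂ be continuous on ℝ², differentiable at every point (s,t) with s ≠ t, and suppose that both k and its partial derivative ∂k/∂s satisfy the Kernel assumption (B.1) (with common constants R, C, κ, α). Then for all u, φ ∈ C_c^∞(ℝ; ℂ) one has ∫_ℝ φ'(s) ( ∫_ℝ k(s,t) u(t) dt ) ds = − ∫_ℝ φ(s) ( ∫_ℝ (∂k/∂s)(s,t) u(t) dt ) ds; i.e., the function s ↦ ∫_ℝ k(s,t)u(t)dt has weak derivative s ↦ ∫_ℝ (∂k/∂s)(s,t)u(t)dt. -/

import Mathlib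

open MeasureTheory

lemma absII {r : ℝ} (hr : -1 < r) (a b : ℝ) :
    IntervalIntegrable (fun x : ℝ => |x| ^ r) volume a b := by
  suffices h : ∀ c : ℝ, 0 ≤ c → IntervalIntegrable (fun x : ℝ => |x| ^ r) volume 0 c by
    have hall : ∀ c : ℝ, IntervalIntegrable (fun x : ℝ => |x| ^ r) volume 0 c := by
      intro c
      rcases le_total 0 c with hc | hc
      · exact h c hc
      · rw [IntervalIntegrable.iff_comp_neg]
        simpa using h (-c) (by linarith)
    exact (hall a).symm.trans (hall b)
  intro c hc
  rw [intervalIntegrable_iff, Set.uIoc_of_le hc]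
  apply (intervalIntegral.intervalIntegrable_rpow' (a := 0) (b := c) hr).1.congr_fun ?_
    measurableSet_Ioc
  intro x hx
  simp [abs_of_pos hx.1]

lemma HintInt {α : ℝ} (hα : α < 1) :
    Integrable ((Set.Ioo (-1 : ℝ) 1).indicator (fun x : ℝ => |x| ^ (-α))) := by
  rw [integrable_indicator_iff measurableSet_Ioo]
  have h := absII (r := -α) (by linarith) (-1) 1
  rw [intervalIntegrable_iff, Set.uIoc_of_le (by norm_num : (-1:ℝ) ≤ 1)] at h
  exact h.mono_set Set.Ioo_subset_Ioc_self

lemma diag_null : (volume.prod volume) {p : ℝ × ℝ | p.1 = p.2} = 0 := by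
  have hm : MeasurableSet {p : ℝ × ℝ | p.1 = p.2} :=
    (isClosed_eq continuous_fst continuous_snd).measurableSet
  rw [Measure.prod_apply hm]
  have h : ∀ s : ℝ, (volume (Prod.mk s ⁻¹' {p : ℝ × ℝ | p.1 = p.2})) = 0 := by
    intro s
    have : Prod.mk s ⁻¹' {p : ℝ × ℝ | p.1 = p.2} = {s} := by
      ext t; simp [eq_comm]
    simp [this]
  simp [h]

theorem stmt_7 (k : ℝ × ℝ → ℂ) (hk_cont : Continuous k)
    (hk_diff : ∀ p : ℝ × ℝ, p.1 ≠ p.2 → DifferentiableAt ℝ k p)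
    (R C κ α : ℝ) (hR : 0 < R) (hC : 0 < C) (hκ : 0 < κ) (hα : α ∈ Set.Ico (0 : ℝ) 1)
    (hbdd1 : ∀ s t : ℝ, s ≠ t → |s| ≤ 3 * R → |t| ≤ 3 * R →
      ‖k (s, t)‖ ≤ C * |s - t| ^ (-α) ∧
      ‖(fderiv ℝ k (s, t)) (1, 0)‖ ≤ C * |s - t| ^ (-α))
    (hbdd2 : ∀ s t : ℝ, s ≠ t → |s - t| > 2 * R →
      ‖k (s, t)‖ ≤ C * Real.exp (-κ * |s - t|) ∧
      ‖(fderiv ℝ k (s, t)) (1, 0)‖ ≤ C * Real.exp (-κ * |s - t|))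
    (hzero : ∀ s t : ℝ, (R < s ∧ R < t) ∨ (s < -R ∧ t < -R) →
      k (s, t) = 0 ∧ (fderiv ℝ k (s, t)) (1, 0) = 0)
    (u φ : ℝ → ℂ) (hu : ContDiff ℝ (⊤ : ℕ∞) u) (hu' : HasCompactSupport u)
    (hφ : ContDiff ℝ (⊤ : ℕ∞) φ) (hφ' : HasCompactSupport φ) :
    ∫ s : ℝ, deriv φ s * ∫ t : ℝ, k (s, t) * u t
      = -∫ s : ℝ, φ s * ∫ t : ℝ, (fderiv ℝ k (s, t)) (1, 0) * u t := by
  obtain ⟨hα0, hα1⟩ := hα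
  set H : ℝ → ℝ := (Set.Ioo (-1 : ℝ) 1).indicator (fun x : ℝ => |x| ^ (-α)) with hHdef
  have hHnn : ∀ x, 0 ≤ H x := fun x =>
    Set.indicator_nonneg (fun y _ => Real.rpow_nonneg (abs_nonneg y) _) x
  have hHint : Integrable H := HintInt hα1
  have hHx : ∀ x : ℝ, |x| ^ (-α) ≤ H x + 1 := by
    intro x
    by_cases h1 : |x| < 1
    · have hm : x ∈ Set.Ioo (-1:ℝ) 1 := abs_lt.1 h1
      rw [hHdef, Set.indicator_of_mem hm]
      linarith
    · have h1' : (1:ℝ) ≤ |x| := not_lt.1 h1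
      have h2 : |x| ^ (-α) ≤ 1 := Real.rpow_le_one_of_one_le_of_nonpos h1' (by linarith)
      have := hHnn x
      linarith
  -- global bound
  have hB : ∀ s t : ℝ, s ≠ t →
      ‖k (s, t)‖ ≤ C * H (s - t) + 2 * C ∧
      ‖(fderiv ℝ k (s, t)) (1, 0)‖ ≤ C * H (s - t) + 2 * C := by
    intro s t hst
    have hHst := hHnn (s - t)
    have key : (‖k (s,t)‖ ≤ C * |s - t| ^ (-α) ∧
          ‖(fderiv ℝ k (s, t)) (1, 0)‖ ≤ C * |s - t| ^ (-α))
        ∨ (k (s,t) = 0 ∧ (fderiv ℝ k (s, t)) (1, 0) = 0)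
        ∨ (‖k (s,t)‖ ≤ C ∧ ‖(fderiv ℝ k (s, t)) (1, 0)‖ ≤ C) := by
      rcases le_or_gt |s - t| (2 * R) with hle | hgt
      · obtain ⟨hd1, hd2⟩ := abs_le.1 hle
        by_cases ht3 : |t| ≤ 3 * R
        · by_cases hs3 : |s| ≤ 3 * R
          · exact Or.inl (hbdd1 s t hst hs3 ht3)
          · right; left
            rcases abs_cases s with ⟨he, _⟩ | ⟨he, _⟩
            · exact hzero s t (Or.inl ⟨by nlinarith [lt_of_not_ge hs3], by nlinarith [lt_of_not_ge hs3]⟩)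
            · exact hzero s t (Or.inr ⟨by nlinarith [lt_of_not_ge hs3], by nlinarith [lt_of_not_ge hs3]⟩)
        · right; left
          rcases abs_cases t with ⟨he, _⟩ | ⟨he, _⟩
          · exact hzero s t (Or.inl ⟨by nlinarith [lt_of_not_ge ht3], by nlinarith [lt_of_not_ge ht3]⟩)
          · exact hzero s t (Or.inr ⟨by nlinarith [lt_of_not_ge ht3], by nlinarith [lt_of_not_ge ht3]⟩)
      · right; right
        obtain ⟨h1, h2⟩ := hbdd2 s t hst hgt
        have hexp : Real.exp (-κ * |s - t|) ≤ 1 :=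
          Real.exp_le_one_iff.2 (by nlinarith [abs_nonneg (s-t)])
        have he := Real.exp_pos (-κ * |s - t|)
        constructor <;> nlinarith
    rcases key with ⟨h1, h2⟩ | ⟨h1, h2⟩ | ⟨h1, h2⟩
    · have hx := hHx (s - t)
      constructor <;> nlinarith
    · rw [h1, h2]
      simp only [norm_zero]
      constructor <;> nlinarith
    · constructor <;> nlinarith
  -- measurability / continuity facts
  have mD : Measurable fun p : ℝ × ℝ => (fderiv ℝ k p) (1, 0) :=
    measurable_fderiv_apply_const ℝ k (1, 0)
  have mDs : ∀ t : ℝ, Measurable fun s : ℝ => (fderiv ℝ k (s, t)) (1, 0) :=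
    fun t => mD.comp (measurable_id.prodMk measurable_const)
  have kc : ∀ t : ℝ, Continuous fun s : ℝ => k (s, t) :=
    fun t => hk_cont.comp (continuous_id.prodMk continuous_const)
  have hφc : Continuous φ := hφ.continuous
  have hφ'c : Continuous (deriv φ) := hφ.continuous_deriv (mod_cast le_top)
  have huc : Continuous u := hu.continuous
  obtain ⟨Aφ, hAφ⟩ := hφ'.exists_bound_of_continuous hφc
  obtain ⟨Aφ', hAφ'⟩ := (hφ'.deriv).exists_bound_of_continuous hφ'c
  have hAφ0 : 0 ≤ Aφ := le_trans (norm_nonneg _) (hAφ 0)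
  have hAφ'0 : 0 ≤ Aφ' := le_trans (norm_nonneg _) (hAφ' 0)
  have huint : Integrable u := huc.integrable_of_hasCompactSupport hu'
  have hφint : Integrable φ := hφc.integrable_of_hasCompactSupport hφ'
  have hφ'int : Integrable (deriv φ) := hφ'c.integrable_of_hasCompactSupport hφ'.deriv
  have hne : ∀ t : ℝ, ∀ᵐ s : ℝ ∂volume, s ≠ t := by
    intro t
    rw [ae_iff]
    have : {s : ℝ | ¬ s ≠ t} = {t} := by ext s; simp
    rw [this]
    exact measure_singleton t
  -- the majorant, interval integrable
  have ψint : ∀ (c t a b : ℝ), IntervalIntegrable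
      (fun s : ℝ => c * (C * H (s - t) + 2 * C)) volume a b := by
    intro c t a b
    exact ((((hHint.comp_sub_right t).intervalIntegrable).const_mul C).add
      intervalIntegrable_const).const_mul c
  -- Key integration by parts for fixed t
  have key : ∀ t : ℝ, (∫ s : ℝ, deriv φ s * k (s, t))
      = -∫ s : ℝ, φ s * (fderiv ℝ k (s, t)) (1, 0) := by
    intro t
    obtain ⟨r, hr⟩ := hφ'.isBounded.subset_closedBall 0
    have hr0 : 0 ≤ r ∨ tsupport φ = ∅ := by
      rcases Set.eq_empty_or_nonempty (tsupport φ) with he | ⟨x, hx⟩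
      · exact Or.inr he
      · left
        have := hr hx
        rw [Metric.mem_closedBall, Real.dist_eq, sub_zero] at this
        exact le_trans (abs_nonneg x) this
    set M : ℝ := max r |t| + 1 with hMdef
    have hrM : r < M := by
      rcases hr0 with h | h
      · have := le_max_left r |t|; simp only [hMdef]; linarith
      · have := le_max_left r |t|; simp only [hMdef]
        have h2 := abs_nonneg t
        have h3 := le_max_right r |t|
        linarith
    have htM : -M < t ∧ t < M := by
      have h1 := le_max_right r |t|
      have h2 := neg_abs_le t
      have h3 := le_abs_self t
      constructor <;> simp only [hMdef] <;> linarith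
    have hM0 : 0 < M := by
      have h1 := le_max_right r |t|
      have h2 := abs_nonneg t
      simp only [hMdef]; linarith
    have habs_of : ∀ s : ℝ, s ∉ Set.Ioc (-M) M → r < |s| := by
      intro s hs
      have h' : s ≤ -M ∨ M < s := by
        by_contra hcon
        push_neg at hcon
        exact hs ⟨hcon.1, hcon.2⟩
      rcases h' with h | h
      · rw [abs_of_nonpos (by linarith)]; linarith
      · rw [abs_of_pos (by linarith)]; linarith
    have hφzero : ∀ x : ℝ, r < |x| → φ x = 0 := by
      intro x hx
      apply image_eq_zero_of_notMem_tsupport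
      intro hmem
      have := hr hmem
      rw [Metric.mem_closedBall, Real.dist_eq, sub_zero] at this
      linarith
    have hφ'zero : ∀ x : ℝ, r < |x| → deriv φ x = 0 := by
      intro x hx
      by_contra h
      have hmem := support_deriv_subset (Function.mem_support.2 h)
      have := hr hmem
      rw [Metric.mem_closedBall, Real.dist_eq, sub_zero] at this
      linarith
    set g : ℝ → ℂ := fun s => φ s * k (s, t) with hgdef
    set g' : ℝ → ℂ := fun s => deriv φ s * k (s, t) + φ s * (fderiv ℝ k (s, t)) (1, 0)
      with hg'def
    have hg'deriv : ∀ s : ℝ, s ≠ t → HasDerivAt g (g' s) s := by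
      intro s hs
      have h1 : HasDerivAt (fun x : ℝ => (x, t)) ((1 : ℝ), (0 : ℝ)) s :=
        (hasDerivAt_id s).prodMk (hasDerivAt_const s t)
      have h2 : HasFDerivAt k (fderiv ℝ k (s, t)) (s, t) := (hk_diff (s, t) hs).hasFDerivAt
      have h3 : HasDerivAt (fun x : ℝ => k (x, t)) ((fderiv ℝ k (s, t)) (1, 0)) s :=
        h2.comp_hasDerivAt s h1
      exact ((hφ.differentiable (by simp) s).hasDerivAt).mul h3
    have hg'm : AEStronglyMeasurable g' volume :=
      ((hφ'c.mul (kc t)).aestronglyMeasurable).add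
        ((hφc.aestronglyMeasurable).mul (mDs t).aestronglyMeasurable)
    have hg'bd : ∀ s : ℝ, s ≠ t → ‖g' s‖ ≤ (Aφ' + Aφ) * (C * H (s - t) + 2 * C) := by
      intro s hs
      obtain ⟨hb1, hb2⟩ := hB s t hs
      have t1 : ‖deriv φ s‖ * ‖k (s, t)‖ ≤ Aφ' * (C * H (s - t) + 2 * C) :=
        mul_le_mul (hAφ' s) hb1 (norm_nonneg _) hAφ'0
      have t2 : ‖φ s‖ * ‖(fderiv ℝ k (s, t)) (1, 0)‖ ≤ Aφ * (C * H (s - t) + 2 * C) :=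
        mul_le_mul (hAφ s) hb2 (norm_nonneg _) hAφ0
      calc ‖g' s‖ ≤ ‖deriv φ s * k (s, t)‖ + ‖φ s * (fderiv ℝ k (s, t)) (1, 0)‖ :=
            norm_add_le _ _
        _ = ‖deriv φ s‖ * ‖k (s, t)‖ + ‖φ s‖ * ‖(fderiv ℝ k (s, t)) (1, 0)‖ := by
            rw [norm_mul, norm_mul]
        _ ≤ Aφ' * (C * H (s - t) + 2 * C) + Aφ * (C * H (s - t) + 2 * C) := add_le_add t1 t2
        _ = (Aφ' + Aφ) * (C * H (s - t) + 2 * C) := by ring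
    have hg'int : ∀ a b : ℝ, IntervalIntegrable g' volume a b := by
      intro a b
      rw [intervalIntegrable_iff]
      have hψ := ψint (Aφ' + Aφ) t a b
      rw [intervalIntegrable_iff] at hψ
      apply Integrable.mono' hψ hg'm.restrict
      filter_upwards [ae_restrict_of_ae (hne t)] with s hs
      exact hg'bd s hs
    have hcont : Continuous g := hφc.mul (kc t)
    have i1 : ∫ s in (-M)..t, g' s = g t - g (-M) :=
      intervalIntegral.integral_eq_sub_of_hasDeriv_right_of_le htM.1.le
        hcont.continuousOn (fun x hx => (hg'deriv x hx.2.ne).hasDerivWithinAt) (hg'int _ _)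
    have i2 : ∫ s in t..M, g' s = g M - g t :=
      intervalIntegral.integral_eq_sub_of_hasDeriv_right_of_le htM.2.le
        hcont.continuousOn (fun x hx => (hg'deriv x hx.1.ne').hasDerivWithinAt) (hg'int _ _)
    have hgM : g M = 0 := by
      have : φ M = 0 := hφzero M (by rw [abs_of_pos (by linarith [htM.1, htM.2, abs_nonneg t])]; exact hrM)
      simp [hgdef, this]
    have hgmM : g (-M) = 0 := by
      have hM0 : 0 < M := by nlinarith [abs_nonneg t, le_max_right r |t|, htM.1, htM.2]
      have : φ (-M) = 0 := hφzero (-M) (by rw [abs_neg, abs_of_pos hM0]; exact hrM)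
      simp [hgdef, this]
    have itot : ∫ s in (-M)..M, g' s = 0 := by
      rw [← intervalIntegral.integral_add_adjacent_intervals (hg'int (-M) t) (hg'int t M),
        i1, i2, hgM, hgmM]
      ring
    have hsupp : ∀ s : ℝ, s ∉ Set.Ioc (-M) M → g' s = 0 := by
      intro s hs
      have habs : r < |s| := habs_of s hs
      simp [hg'def, hφzero s habs, hφ'zero s habs]
    have hint1 : Integrable (fun s : ℝ => deriv φ s * k (s, t)) :=
      (hφ'c.mul (kc t)).integrable_of_hasCompactSupport (hφ'.deriv.mul_right)
    have hint2 : Integrable (fun s : ℝ => φ s * (fderiv ℝ k (s, t)) (1, 0)) := by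
      have hsub : Function.support (fun s : ℝ => φ s * (fderiv ℝ k (s, t)) (1, 0))
          ⊆ Set.Ioc (-M) M := by
        intro s hs
        by_contra hmem
        have habs : r < |s| := habs_of s hmem
        exact hs (by simp [hφzero s habs])
      rw [← integrableOn_iff_integrable_of_support_subset hsub]
      have hψ := ψint Aφ t (-M) M
      rw [intervalIntegrable_iff, Set.uIoc_of_le (by linarith [htM.1, htM.2] : -M ≤ M)] at hψ
      apply Integrable.mono' hψ
        (((hφc.aestronglyMeasurable).mul (mDs t).aestronglyMeasurable).restrict)
      filter_upwards [ae_restrict_of_ae (hne t)] with s hs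
      obtain ⟨_, hb2⟩ := hB s t hs
      calc ‖φ s * (fderiv ℝ k (s, t)) (1, 0)‖
          = ‖φ s‖ * ‖(fderiv ℝ k (s, t)) (1, 0)‖ := norm_mul _ _
        _ ≤ Aφ * (C * H (s - t) + 2 * C) := mul_le_mul (hAφ s) hb2 (norm_nonneg _) hAφ0
    have hzero_tot : (∫ s : ℝ, g' s) = 0 := by
      rw [← setIntegral_eq_integral_of_forall_compl_eq_zero hsupp,
        ← intervalIntegral.integral_of_le (by linarith [htM.1, htM.2] : -M ≤ M)]
      exact itot
    have hsplit := integral_add hint1 hint2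
    rw [hg'def] at hzero_tot
    rw [hzero_tot] at hsplit
    exact eq_neg_of_add_eq_zero_left hsplit.symm
  -- product integrability
  have prodInt : ∀ (f : ℝ → ℂ) (W : ℝ × ℝ → ℂ) (Af : ℝ),
      AEStronglyMeasurable W (volume.prod volume) →
      (∀ s t : ℝ, s ≠ t → ‖W (s, t)‖ ≤ C * H (s - t) + 2 * C) →
      Continuous f → Integrable f → (∀ x, ‖f x‖ ≤ Af) →
      Integrable (fun p : ℝ × ℝ => f p.1 * (W p * u p.2)) (volume.prod volume) := by
    intro f W Af hWm hWbd hfc hfint hAf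
    have hm : AEStronglyMeasurable (fun p : ℝ × ℝ => f p.1 * (W p * u p.2))
        (volume.prod volume) :=
      ((hfc.comp continuous_fst).aestronglyMeasurable).mul
        (hWm.mul ((huc.comp continuous_snd).aestronglyMeasurable))
    have conv : Integrable (fun p : ℝ × ℝ => ‖u p.2‖ * H (p.1 - p.2)) (volume.prod volume) := by
      have h := MeasureTheory.Integrable.convolution_integrand
        (L := ContinuousLinearMap.mul ℝ ℝ) huint.norm hHint
      simpa using h
    have prod2 : Integrable (fun p : ℝ × ℝ => ‖f p.1‖ * ‖u p.2‖) (volume.prod volume) :=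
      hfint.norm.mul_prod huint.norm
    apply Integrable.mono' ((conv.const_mul (Af * C)).add (prod2.const_mul (2 * C))) hm
    have hae : ∀ᵐ p : ℝ × ℝ ∂(volume.prod volume), p.1 ≠ p.2 := by
      rw [ae_iff]
      have hset : {p : ℝ × ℝ | ¬ p.1 ≠ p.2} = {p : ℝ × ℝ | p.1 = p.2} := by
        ext p; simp
      rw [hset]
      exact diag_null
    filter_upwards [hae] with p hp
    have h1 : ‖W p‖ ≤ C * H (p.1 - p.2) + 2 * C := by
      have := hWbd p.1 p.2 hp
      simpa using this
    have hHp := hHnn (p.1 - p.2)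
    have h2 : ‖f p.1‖ * (‖u p.2‖ * H (p.1 - p.2)) ≤ Af * (‖u p.2‖ * H (p.1 - p.2)) :=
      mul_le_mul_of_nonneg_right (hAf p.1)
        (mul_nonneg (norm_nonneg _) hHp)
    calc ‖f p.1 * (W p * u p.2)‖ = ‖f p.1‖ * (‖W p‖ * ‖u p.2‖) := by
          rw [norm_mul, norm_mul]
      _ ≤ ‖f p.1‖ * ((C * H (p.1 - p.2) + 2 * C) * ‖u p.2‖) :=
          mul_le_mul_of_nonneg_left
            (mul_le_mul_of_nonneg_right h1 (norm_nonneg _)) (norm_nonneg _)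
      _ = C * (‖f p.1‖ * (‖u p.2‖ * H (p.1 - p.2))) + 2 * C * (‖f p.1‖ * ‖u p.2‖) := by
          ring
      _ ≤ C * (Af * (‖u p.2‖ * H (p.1 - p.2))) + 2 * C * (‖f p.1‖ * ‖u p.2‖) := by
          have := mul_le_mul_of_nonneg_left h2 hC.le
          linarith
      _ = Af * C * (‖u p.2‖ * H (p.1 - p.2)) + 2 * C * (‖f p.1‖ * ‖u p.2‖) := by ring
  have P1 : Integrable (fun p : ℝ × ℝ => deriv φ p.1 * (k p * u p.2)) (volume.prod volume) :=
    prodInt (deriv φ) k Aφ' hk_cont.aestronglyMeasurable (fun s t h => (hB s t h).1)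
      hφ'c hφ'int hAφ'
  have P2 : Integrable (fun p : ℝ × ℝ => φ p.1 * ((fderiv ℝ k p) (1, 0) * u p.2))
      (volume.prod volume) :=
    prodInt φ (fun p => (fderiv ℝ k p) (1, 0)) Aφ mD.aestronglyMeasurable
      (fun s t h => (hB s t h).2) hφc hφint hAφ
  -- assembly
  calc ∫ s : ℝ, deriv φ s * ∫ t : ℝ, k (s, t) * u t
      = ∫ s : ℝ, ∫ t : ℝ, deriv φ s * (k (s, t) * u t) := by
        simp_rw [integral_const_mul]
    _ = ∫ t : ℝ, ∫ s : ℝ, deriv φ s * (k (s, t) * u t) := by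
        apply integral_integral_swap
        exact P1
    _ = ∫ t : ℝ, (∫ s : ℝ, deriv φ s * k (s, t)) * u t := by
        congr 1; funext t
        rw [← integral_mul_const]
        simp_rw [mul_assoc]
    _ = ∫ t : ℝ, (-∫ s : ℝ, φ s * (fderiv ℝ k (s, t)) (1, 0)) * u t := by
        congr 1; funext t
        rw [key t]
    _ = -∫ t : ℝ, ∫ s : ℝ, φ s * ((fderiv ℝ k (s, t)) (1, 0) * u t) := by
        rw [← integral_neg]
        congr 1; funext t
        rw [neg_mul, ← integral_mul_const]
        simp_rw [mul_assoc]
    _ = -∫ s : ℝ, ∫ t : ℝ, φ s * ((fderiv ℝ k (s, t)) (1, 0) * u t) := by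
        congr 1
        apply (integral_integral_swap _).symm
        exact P2
    _ = -∫ s : ℝ, φ s * ∫ t : ℝ, (fderiv ℝ k (s, t)) (1, 0) * u t := by
        simp_rw [integral_const_mul]
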